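/- Let F be a bounded operator on a Hilbert space with F² = 1 − R, R compact, and suppose the annulus {λ : r₁ < |λ − 1| < r₂} (with 0 < r₁ < r₂ < 2) is disjoint from Sp(F). Then for r ∈ (r₁, r₂), the operator Π = (1/2πi)∮_{|λ−1|=r}(F − λ)⁻¹ dλ is an idempotent and Π − ½(F + 1) is compact. -/

import Mathlib

open scoped Real
open Complex Metric MeasureTheory

section StmtAux

variable {E F' : Type*} [NormedAddCommGroup E] [NormedSpace ℂ E] [CompleteSpace E]
  [NormedAddCommGroup F'] [NormedSpace ℂ F'] [CompleteSpace F']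

lemma aux_clm_circleIntegral_comm (L : E →L[ℂ] F') {f : ℂ → E} {c : ℂ} {ρ : ℝ}
    (hf : CircleIntegrable f c ρ) :
    L (∮ z in C(c, ρ), f z) = ∮ z in C(c, ρ), L (f z) := by
  simp only [circleIntegral]
  rw [← L.intervalIntegral_comp_comm hf.out]
  simp only [_root_.map_smul]

lemma aux_circleIntegral_add {f g : ℂ → E} {c : ℂ} {ρ : ℝ}
    (hf : CircleIntegrable f c ρ) (hg : CircleIntegrable g c ρ) :
    (∮ z in C(c, ρ), (f z + g z)) = (∮ z in C(c, ρ), f z) + ∮ z in C(c, ρ), g z := by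
  simp only [circleIntegral, smul_add, intervalIntegral.integral_add hf.out hg.out]

lemma aux_resolvent_identity {A : Type*} [Ring A] [Algebra ℂ A] (a : A) {z w : ℂ}
    (hz : z ∈ resolventSet ℂ a) (hw : w ∈ resolventSet ℂ a) :
    resolvent a z - resolvent a w = (w - z) • (resolvent a z * resolvent a w) := by
  have hz' : IsUnit (algebraMap ℂ A z - a) := hz
  have hw' : IsUnit (algebraMap ℂ A w - a) := hw
  set u := hz'.unit with hu
  set v := hw'.unit with hv
  have h1 : resolvent a z = ↑u⁻¹ := spectrum.resolvent_eq hz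
  have h2 : resolvent a w = ↑v⁻¹ := spectrum.resolvent_eq hw
  have huspec : (u : A) = algebraMap ℂ A z - a := hz'.unit_spec
  have hvspec : (v : A) = algebraMap ℂ A w - a := hw'.unit_spec
  have key : (↑u⁻¹ : A) - ↑v⁻¹ = ↑u⁻¹ * ((v : A) - (u : A)) * ↑v⁻¹ := by
    rw [mul_sub, sub_mul]
    simp [mul_assoc]
  have hdiff : (v : A) - (u : A) = (w - z) • (1 : A) := by
    rw [huspec, hvspec, ← Algebra.algebraMap_eq_smul_one, map_sub]
    abel
  rw [h1, h2, key, hdiff, mul_smul_comm, mul_one, smul_mul_assoc]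

lemma aux_integral_mem_closed_submodule (S : Submodule ℂ E) (hS : IsClosed (S : Set E))
    {g : ℝ → E} (hg : Continuous g) (hmem : ∀ θ, g θ ∈ S) (a b : ℝ) :
    (∫ θ in a..b, g θ) ∈ S := by
  haveI : CompleteSpace S := hS.completeSpace_coe
  have h : (∫ θ in a..b, g θ) = S.subtypeL (∫ θ in a..b, (⟨g θ, hmem θ⟩ : S)) := by
    rw [← S.subtypeL.intervalIntegral_comp_comm ((hg.subtype_mk hmem).intervalIntegrable a b)]
    rfl
  rw [h]
  exact Submodule.coe_mem _

lemma aux_circleIntegral_sub_inv_zero {c w : ℂ} {ρ : ℝ} (h : 0 ≤ ρ) (hw : w ∉ closedBall c ρ) :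
    (∮ z in C(c, ρ), (z - w)⁻¹) = 0 := by
  apply Complex.circleIntegral_eq_zero_of_differentiable_on_off_countable h Set.countable_empty
  · intro z hz
    exact (ContinuousAt.continuousWithinAt (by
      exact (continuousAt_id.sub continuousAt_const).inv₀
        (sub_ne_zero.2 (fun hzw => hw ((show z = w from hzw) ▸ hz)))))
  · intro z hz
    exact ((differentiableAt_id.sub (differentiableAt_const w)).inv
      (sub_ne_zero.2 (fun hzw => hw ((show z = w from hzw) ▸ ball_subset_closedBall hz.1))))

lemma aux_circleIntegral_inv_sub_zero {c w : ℂ} {ρ : ℝ} (h : 0 ≤ ρ) (hw : w ∉ closedBall c ρ) :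
    (∮ z in C(c, ρ), (w - z)⁻¹) = 0 := by
  apply Complex.circleIntegral_eq_zero_of_differentiable_on_off_countable h Set.countable_empty
  · intro z hz
    exact (ContinuousAt.continuousWithinAt (by
      exact (continuousAt_const.sub continuousAt_id).inv₀
        (sub_ne_zero.2 (fun hzw => hw ((show w = z from hzw) ▸ hz)))))
  · intro z hz
    exact ((differentiableAt_const w).sub differentiableAt_id).inv
      (sub_ne_zero.2 (fun hzw => hw ((show w = z from hzw) ▸ ball_subset_closedBall hz.1)))

lemma aux_circleIntegral_mem (S : Submodule ℂ E) (hS : IsClosed (S : Set E)) {f : ℂ → E}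
    {c : ℂ} {ρ : ℝ} (hρ : 0 ≤ ρ) (hf : ContinuousOn f (sphere c ρ))
    (hmem : ∀ z ∈ sphere c ρ, f z ∈ S) :
    (∮ z in C(c, ρ), f z) ∈ S := by
  apply aux_integral_mem_closed_submodule S hS (g := fun θ =>
    deriv (circleMap c ρ) θ • f (circleMap c ρ θ))
  · apply Continuous.smul
    · show Continuous fun θ : ℝ => deriv (circleMap c ρ) θ
      simp only [deriv_circleMap]
      exact (continuous_circleMap 0 ρ).mul continuous_const
    · exact hf.comp_continuous (continuous_circleMap c ρ) (fun θ => circleMap_mem_sphere c hρ θ)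
  · intro θ
    exact S.smul_mem _ (hmem _ (circleMap_mem_sphere c hρ θ))

lemma aux_circleIntegral_def (f : ℂ → E) (c : ℂ) (ρ : ℝ) :
    (∮ z in C(c, ρ), f z)
      = ∫ θ in (0:ℝ)..2*π, deriv (circleMap c ρ) θ • f (circleMap c ρ θ) := rfl

lemma aux_circleIntegral_def' (f : ℂ → ℂ) (c : ℂ) (ρ : ℝ) :
    (∮ z in C(c, ρ), f z)
      = ∫ θ in (0:ℝ)..2*π, deriv (circleMap c ρ) θ * f (circleMap c ρ θ) := by
  rw [aux_circleIntegral_def]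
  simp only [smul_eq_mul]

end StmtAux


set_option maxHeartbeats 1000000 in
/-- Let `F` be bounded on a complex Hilbert space with `F² = 1 − R`, `R`
compact, and suppose the annulus `{λ : r₁ < |λ − 1| < r₂}` (with `0 < r₁ < r₂ < 2`) is
disjoint from `Sp(F)`.  Then for `r ∈ (r₁, r₂)` the Riesz projection
`Π = (1/2πi)∮_{|λ−1|=r} (λ − F)⁻¹ dλ` is an idempotent and `Π − ½(F + 1)` is compact. -/
theorem stmt15 {H : Type*} [NormedAddCommGroup H] [InnerProductSpace ℂ H] [CompleteSpace H]
    (F R : H →L[ℂ] H) (hR : IsCompactOperator R) (hF : F * F = 1 - R)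
    (r₁ r₂ : ℝ) (h01 : 0 < r₁) (h12 : r₁ < r₂) (h22 : r₂ < 2)
    (hann : ∀ l : ℂ, r₁ < ‖l - 1‖ → ‖l - 1‖ < r₂ → l ∉ spectrum ℂ F)
    (r : ℝ) (hr : r ∈ Set.Ioo r₁ r₂)
    (P : H →L[ℂ] H)
    (hP : P = (2 * π * Complex.I : ℂ)⁻¹ •
        ∮ z in C(1, r), Ring.inverse (z • (1 : H →L[ℂ] H) - F)) :
    P * P = P ∧ IsCompactOperator ((P - (1 / 2 : ℂ) • (F + 1)) : H →L[ℂ] H) := by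
  obtain ⟨hr1, hr2⟩ := hr
  have hr0 : 0 < r := h01.trans hr1
  have hπ : (2 * (π:ℂ) * Complex.I) ≠ 0 := by
    simp [Real.pi_ne_zero, Complex.I_ne_zero, Complex.ofReal_ne_zero]
  -- resolvent set facts
  have hres : ∀ z : ℂ, r₁ < ‖z - 1‖ → ‖z - 1‖ < r₂ → z ∈ resolventSet ℂ F := by
    intro z h1 h2
    have h := hann z h1 h2
    rwa [spectrum, Set.notMem_compl_iff] at h
  have hsphere : ∀ ρ : ℝ, r₁ < ρ → ρ < r₂ → ∀ z ∈ sphere (1:ℂ) ρ, z ∈ resolventSet ℂ F := by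
    intro ρ hρ1 hρ2 z hz
    rw [mem_sphere_iff_norm] at hz
    exact hres z (hz ▸ hρ1) (hz ▸ hρ2)
  have hdiff : ∀ z ∈ resolventSet ℂ F, DifferentiableAt ℂ (resolvent F) z :=
    fun z hz => (spectrum.hasDerivAt_resolvent hz).differentiableAt
  have hcont : ContinuousOn (resolvent F) (resolventSet ℂ F) :=
    fun z hz => ((hdiff z hz).continuousAt).continuousWithinAt
  have hci : ∀ ρ : ℝ, r₁ < ρ → ρ < r₂ → CircleIntegrable (resolvent F) 1 ρ := by
    intro ρ h1 h2
    exact ContinuousOn.circleIntegrable (le_of_lt (h01.trans h1))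
      (hcont.mono (fun z hz => hsphere ρ h1 h2 z hz))
  -- rewrite P in terms of the resolvent
  have hP' : P = (2 * (π:ℂ) * Complex.I)⁻¹ • ∮ z in C(1, r), resolvent F z := by
    rw [hP]
    have : ∀ z : ℂ, Ring.inverse (z • (1 : H →L[ℂ] H) - F) = resolvent F z := by
      intro z
      simp [resolvent, Algebra.algebraMap_eq_smul_one]
    simp only [this]
  set J : H →L[ℂ] H := ∮ z in C(1, r), resolvent F z with hJdef
  -- idempotency
  have hJJ : J * J = (2 * (π:ℂ) * Complex.I) • J := by
    set r' : ℝ := (r₁ + r)/2 with hr'def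
    have hr'1 : r₁ < r' := by rw [hr'def]; linarith
    have hr'r : r' < r := by rw [hr'def]; linarith
    have hr'2 : r' < r₂ := by linarith
    have hr'0 : 0 < r' := h01.trans hr'1
    have hJ' : (∮ z in C((1:ℂ), r'), resolvent F z) = J := by
      rw [hJdef]
      symm
      apply Complex.circleIntegral_eq_of_differentiable_on_annulus_off_countable hr'0 hr'r.le
        Set.countable_empty
      · apply hcont.mono
        intro z hz
        obtain ⟨hz1, hz2⟩ := hz
        rw [mem_closedBall, dist_eq_norm] at hz1
        rw [mem_ball, dist_eq_norm, not_lt] at hz2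
        exact hres z (lt_of_lt_of_le hr'1 hz2) (lt_of_le_of_lt hz1 hr2)
      · intro z hz
        obtain ⟨⟨hz1, hz2⟩, -⟩ := hz
        rw [mem_ball, dist_eq_norm] at hz1
        rw [mem_closedBall, dist_eq_norm, not_le] at hz2
        exact hdiff z (hres z (lt_of_lt_of_le hr'1 hz2.le) (hz1.trans hr2))
    have hpt : ∀ z ∈ sphere (1:ℂ) r', resolvent F z * J =
        (2 * (π:ℂ) * Complex.I) • resolvent F z
          - ∮ w in C((1:ℂ), r), (w - z)⁻¹ • resolvent F w := by
      intro z hz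
      have hz' : z ∈ resolventSet ℂ F := hsphere r' hr'1 hr'2 z hz
      have hznorm : ‖z - 1‖ = r' := mem_sphere_iff_norm.mp hz
      have hzball : z ∈ ball (1:ℂ) r := by
        rw [mem_ball, dist_eq_norm, hznorm]; exact hr'r
      have hzs : ∀ w ∈ sphere (1:ℂ) r, w - z ≠ 0 := by
        intro w hw hcon
        rw [sub_eq_zero] at hcon
        rw [mem_sphere_iff_norm] at hw
        rw [hcon, hznorm] at hw
        exact hr'r.ne hw
      have h2 : resolvent F z * J = ∮ w in C((1:ℂ), r), resolvent F z * resolvent F w := by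
        have hcomm := aux_clm_circleIntegral_comm
          (ContinuousLinearMap.mul ℂ (H →L[ℂ] H) (resolvent F z)) (hci r hr1 hr2)
        simpa using hcomm
      have hint : Set.EqOn (fun w => resolvent F z * resolvent F w)
          (fun w => (w - z)⁻¹ • resolvent F z - (w - z)⁻¹ • resolvent F w)
          (sphere (1:ℂ) r) := by
        intro w hw
        have hw' : w ∈ resolventSet ℂ F := hsphere r hr1 hr2 w hw
        have hzw : w - z ≠ 0 := hzs w hw
        have hid := aux_resolvent_identity F hz' hw'
        show resolvent F z * resolvent F w
          = (w - z)⁻¹ • resolvent F z - (w - z)⁻¹ • resolvent F w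
        rw [← smul_sub, hid, smul_smul, inv_mul_cancel₀ hzw, one_smul]
      have hA2 : CircleIntegrable (fun w : ℂ => (w - z)⁻¹ • resolvent F z) 1 r :=
        (((continuousOn_id.sub continuousOn_const).inv₀ hzs).smul
          continuousOn_const).circleIntegrable hr0.le
      have hB2 : CircleIntegrable (fun w : ℂ => (w - z)⁻¹ • resolvent F w) 1 r :=
        (((continuousOn_id.sub continuousOn_const).inv₀ hzs).smul
          (hcont.mono (fun w hw => hsphere r hr1 hr2 w hw))).circleIntegrable hr0.le
      rw [h2, circleIntegral.integral_congr hr0.le hint, circleIntegral.integral_sub hA2 hB2,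
        circleIntegral.integral_smul_const, circleIntegral.integral_sub_inv_of_mem_ball hzball]
    have hRcont' : ContinuousOn (resolvent F) (sphere (1:ℂ) r') :=
      hcont.mono (fun z hz => hsphere r' hr'1 hr'2 z hz)
    have hgeq : Set.EqOn (fun z => ∮ w in C((1:ℂ), r), (w - z)⁻¹ • resolvent F w)
        (fun z => (2 * (π:ℂ) * Complex.I) • resolvent F z - resolvent F z * J)
        (sphere (1:ℂ) r') := by
      intro z hz
      have h := hpt z hz
      show (∮ w in C((1:ℂ), r), (w - z)⁻¹ • resolvent F w)
        = (2 * (π:ℂ) * Complex.I) • resolvent F z - resolvent F z * J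
      rw [h]
      abel
    have hgcont : ContinuousOn (fun z => ∮ w in C((1:ℂ), r), (w - z)⁻¹ • resolvent F w)
        (sphere (1:ℂ) r') :=
      ((hRcont'.const_smul (2 * (π:ℂ) * Complex.I)).sub
        (hRcont'.mul (continuousOn_const (c := J)))).congr (fun z hz => hgeq hz)
    have hsplit : (∮ z in C((1:ℂ), r'), resolvent F z * J)
        = (2 * (π:ℂ) * Complex.I) • (∮ z in C((1:ℂ), r'), resolvent F z)
          - ∮ z in C((1:ℂ), r'), (∮ w in C((1:ℂ), r), (w - z)⁻¹ • resolvent F w) := by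
      rw [circleIntegral.integral_congr hr'0.le (fun z hz => hpt z hz),
        circleIntegral.integral_sub ((hRcont'.fun_const_smul _).circleIntegrable hr'0.le)
          (hgcont.circleIntegrable hr'0.le),
        circleIntegral.integral_smul]
    have hLHS : J * J = ∮ z in C((1:ℂ), r'), resolvent F z * J := by
      have hcomm := aux_clm_circleIntegral_comm
        ((ContinuousLinearMap.mul ℂ (H →L[ℂ] H)).flip J) (hci r' hr'1 hr'2)
      simp only [ContinuousLinearMap.flip_apply, ContinuousLinearMap.mul_apply'] at hcomm
      rw [hJ'] at hcomm
      exact hcomm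
    have h2π : (0:ℝ) ≤ 2 * π := Real.two_pi_pos.le
    have hzero : (∮ z in C((1:ℂ), r'), (∮ w in C((1:ℂ), r), (w - z)⁻¹ • resolvent F w)) = 0 := by
      have hKcont : Continuous (fun p : ℝ × ℝ =>
          (deriv (circleMap 1 r') p.1 * (circleMap 1 r p.2 - circleMap 1 r' p.1)⁻¹) •
            (deriv (circleMap 1 r) p.2 • resolvent F (circleMap 1 r p.2))) := by
        have hu : Continuous fun θ : ℝ => deriv (circleMap 1 r') θ := by
          show Continuous fun θ : ℝ => deriv (circleMap 1 r') θ
          simp only [deriv_circleMap]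
          exact (continuous_circleMap 0 r').mul continuous_const
        have hv : Continuous fun φ : ℝ => deriv (circleMap 1 r) φ := by
          show Continuous fun φ : ℝ => deriv (circleMap 1 r) φ
          simp only [deriv_circleMap]
          exact (continuous_circleMap 0 r).mul continuous_const
        have hne : ∀ p : ℝ × ℝ, circleMap 1 r p.2 - circleMap 1 r' p.1 ≠ 0 := by
          intro p hcon
          rw [sub_eq_zero] at hcon
          have h1 : ‖circleMap 1 r p.2 - 1‖ = r :=
            mem_sphere_iff_norm.mp (circleMap_mem_sphere 1 hr0.le p.2)
          have h2 : ‖circleMap 1 r' p.1 - 1‖ = r' :=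
            mem_sphere_iff_norm.mp (circleMap_mem_sphere 1 hr'0.le p.1)
          rw [← hcon, h1] at h2
          exact hr'r.ne' h2
        have hR1 : Continuous fun p : ℝ × ℝ => resolvent F (circleMap 1 r p.2) :=
          (hcont.mono (fun z hz => hsphere r hr1 hr2 z hz)).comp_continuous
            ((continuous_circleMap 1 r).comp continuous_snd)
            (fun p => circleMap_mem_sphere 1 hr0.le p.2)
        exact ((hu.comp continuous_fst).mul (Continuous.inv₀
            (((continuous_circleMap 1 r).comp continuous_snd).sub
              ((continuous_circleMap 1 r').comp continuous_fst)) hne)).smul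
          ((hv.comp continuous_snd).smul hR1)
      have hKint : Integrable (Function.uncurry fun θ φ : ℝ =>
          (deriv (circleMap 1 r') θ * (circleMap 1 r φ - circleMap 1 r' θ)⁻¹) •
            (deriv (circleMap 1 r) φ • resolvent F (circleMap 1 r φ)))
          ((volume.restrict (Set.Ioc (0:ℝ) (2*π))).prod
            (volume.restrict (Set.Ioc (0:ℝ) (2*π)))) := by
        rw [Measure.prod_restrict, ← Measure.volume_eq_prod]
        exact ((hKcont.continuousOn.integrableOn_compact
            (isCompact_Icc.prod isCompact_Icc)).mono_set
          (Set.prod_mono Set.Ioc_subset_Icc_self Set.Ioc_subset_Icc_self))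
      have hswap_form : (∮ z in C((1:ℂ), r'), (∮ w in C((1:ℂ), r), (w - z)⁻¹ • resolvent F w))
          = ∫ θ in (0:ℝ)..2*π, ∫ φ in (0:ℝ)..2*π,
              (deriv (circleMap 1 r') θ * (circleMap 1 r φ - circleMap 1 r' θ)⁻¹) •
                (deriv (circleMap 1 r) φ • resolvent F (circleMap 1 r φ)) := by
        rw [aux_circleIntegral_def]
        apply intervalIntegral.integral_congr
        intro θ _
        simp only
        rw [aux_circleIntegral_def, ← intervalIntegral.integral_smul]
        apply intervalIntegral.integral_congr
        intro φ _
        simp only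
        simp only [smul_smul]
        congr 1
        ring
      rw [hswap_form]
      simp only [intervalIntegral.integral_of_le h2π]
      rw [MeasureTheory.integral_integral_swap hKint]
      have hinner : ∀ φ : ℝ, (∫ θ in Set.Ioc (0:ℝ) (2*π),
          (deriv (circleMap 1 r') θ * (circleMap 1 r φ - circleMap 1 r' θ)⁻¹) •
            (deriv (circleMap 1 r) φ • resolvent F (circleMap 1 r φ))) = 0 := by
        intro φ
        rw [integral_smul_const]
        have hsc : (∫ θ in Set.Ioc (0:ℝ) (2*π),
            deriv (circleMap 1 r') θ * (circleMap 1 r φ - circleMap 1 r' θ)⁻¹) = 0 := by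
          have hz0 : (∮ z in C((1:ℂ), r'), (circleMap 1 r φ - z)⁻¹) = 0 := by
            apply aux_circleIntegral_inv_sub_zero hr'0.le
            rw [mem_closedBall, dist_eq_norm,
              mem_sphere_iff_norm.mp (circleMap_mem_sphere 1 hr0.le φ)]
            exact not_le.mpr hr'r
          rw [aux_circleIntegral_def'] at hz0
          rw [← intervalIntegral.integral_of_le h2π]
          exact hz0
        rw [hsc, zero_smul]
      simp only [hinner, integral_zero]
    rw [hLHS, hsplit, hJ', hzero, sub_zero]
  have hidem : P * P = P := by
    rw [hP', smul_mul_smul_comm, hJJ, smul_smul]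
    congr 1
    field_simp
  -- compactness
  have hcompact : IsCompactOperator ((P - (1 / 2 : ℂ) • (F + 1)) : H →L[ℂ] H) := by
    have hπℂ : ((π:ℂ)) ≠ 0 := Complex.ofReal_ne_zero.mpr Real.pi_ne_zero
    have hfac : ∀ z ∈ sphere (1:ℂ) r, z - 1 ≠ 0 ∧ z + 1 ≠ 0 := by
      intro z hz
      rw [mem_sphere_iff_norm] at hz
      constructor
      · intro h; rw [h, norm_zero] at hz; exact hr0.ne hz
      · intro h
        have hz1 : z = -1 := by linear_combination h
        rw [hz1] at hz
        have : ‖(-1:ℂ) - 1‖ = 2 := by norm_num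
        rw [this] at hz
        linarith
    have hzsp : ∀ z ∈ sphere (1:ℂ) r, (z^2 - (1:ℂ)) ≠ 0 := by
      intro z hz
      obtain ⟨h1, h2⟩ := hfac z hz
      have hfactor : z^2 - 1 = (z - 1) * (z + 1) := by ring
      rw [hfactor]
      exact mul_ne_zero h1 h2
    have hmcont : ContinuousOn (fun z : ℂ => (z^2 - 1)⁻¹ • (z • (1:H →L[ℂ] H) + F))
        (sphere (1:ℂ) r) := by
      apply ContinuousOn.fun_smul
      · exact ((continuousOn_id.pow 2).sub continuousOn_const).inv₀ hzsp
      · exact (continuousOn_id.smul continuousOn_const).add continuousOn_const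
    have hmci : CircleIntegrable (fun z : ℂ => (z^2-1)⁻¹ • (z • (1:H →L[ℂ] H) + F)) 1 r :=
      hmcont.circleIntegrable hr0.le
    -- scalar integrals
    have hone : (∮ z in C((1:ℂ), r), (z - 1)⁻¹) = 2 * (π:ℂ) * Complex.I :=
      circleIntegral.integral_sub_center_inv 1 hr0.ne'
    have hneg : (-1 : ℂ) ∉ closedBall (1:ℂ) r := by
      rw [mem_closedBall, dist_eq_norm]
      have : ‖(-1:ℂ) - 1‖ = 2 := by norm_num
      rw [this]
      linarith
    have htwo : (∮ z in C((1:ℂ), r), (z + 1)⁻¹) = 0 := by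
      have h := aux_circleIntegral_sub_inv_zero (c := 1) (w := -1) hr0.le hneg
      simpa [sub_neg_eq_add] using h
    have hci1 : CircleIntegrable (fun z : ℂ => (z - 1)⁻¹) 1 r :=
      ContinuousOn.circleIntegrable hr0.le
        ((continuousOn_id.sub continuousOn_const).inv₀ (fun z hz => (hfac z hz).1))
    have hci2 : CircleIntegrable (fun z : ℂ => (z + 1)⁻¹) 1 r :=
      ContinuousOn.circleIntegrable hr0.le
        ((continuousOn_id.add continuousOn_const).inv₀ (fun z hz => (hfac z hz).2))
    have hS1 : (∮ z in C((1:ℂ), r), (z^2 - 1)⁻¹) = (π:ℂ) * Complex.I := by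
      have heq : Set.EqOn (fun z : ℂ => (z^2-1)⁻¹)
          (fun z : ℂ => (2:ℂ)⁻¹ * ((z-1)⁻¹ - (z+1)⁻¹)) (sphere 1 r) := by
        intro z hz
        obtain ⟨h1, h2⟩ := hfac z hz
        have hne : (z^2 - (1:ℂ)) ≠ 0 := hzsp z hz
        field_simp [hne]
        ring
      rw [circleIntegral.integral_congr hr0.le heq, circleIntegral.integral_const_mul,
        circleIntegral.integral_sub hci1 hci2, hone, htwo]
      field_simp
      ring
    have hS2 : (∮ z in C((1:ℂ), r), z * (z^2 - 1)⁻¹) = (π:ℂ) * Complex.I := by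
      have heq : Set.EqOn (fun z : ℂ => z * (z^2-1)⁻¹)
          (fun z : ℂ => (2:ℂ)⁻¹ * ((z-1)⁻¹ + (z+1)⁻¹)) (sphere 1 r) := by
        intro z hz
        obtain ⟨h1, h2⟩ := hfac z hz
        have hne : (z^2 - (1:ℂ)) ≠ 0 := hzsp z hz
        field_simp [hne]
        ring
      rw [circleIntegral.integral_congr hr0.le heq, circleIntegral.integral_const_mul,
        aux_circleIntegral_add hci1 hci2, hone, htwo]
      field_simp
      ring
    have hA : CircleIntegrable (fun z : ℂ => (z * (z^2-1)⁻¹) • (1:H →L[ℂ] H)) 1 r :=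
      ContinuousOn.circleIntegrable hr0.le
        ((continuousOn_id.mul (((continuousOn_id.pow 2).sub continuousOn_const).inv₀
          hzsp)).smul continuousOn_const)
    have hB : CircleIntegrable (fun z : ℂ => (z^2-1)⁻¹ • F) 1 r :=
      ContinuousOn.circleIntegrable hr0.le
        ((((continuousOn_id.pow 2).sub continuousOn_const).inv₀ hzsp).smul continuousOn_const)
    have hmain : (∮ z in C((1:ℂ), r), (z^2 - 1)⁻¹ • (z • (1:H →L[ℂ] H) + F))
        = ((π:ℂ) * Complex.I) • (1:H →L[ℂ] H) + ((π:ℂ) * Complex.I) • F := by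
      have heq : ∀ z : ℂ, (z^2 - 1)⁻¹ • (z • (1:H →L[ℂ] H) + F)
          = (z * (z^2-1)⁻¹) • (1:H →L[ℂ] H) + (z^2-1)⁻¹ • F := by
        intro z
        rw [smul_add, smul_smul, mul_comm]
      simp only [heq]
      rw [aux_circleIntegral_add hA hB, circleIntegral.integral_smul_const,
        circleIntegral.integral_smul_const, hS1, hS2]
    -- the compact remainder
    have hCrep : ∀ z ∈ sphere (1:ℂ) r,
        resolvent F z - (z^2 - 1)⁻¹ • (z • (1:H →L[ℂ] H) + F)
          = resolvent F z * ((-(z^2 - 1)⁻¹ : ℂ) • R) := by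
      intro z hz
      have hz' : z ∈ resolventSet ℂ F := hsphere r hr1 hr2 z hz
      have hne : (z^2 - (1:ℂ)) ≠ 0 := hzsp z hz
      have hz'' : IsUnit (algebraMap ℂ (H →L[ℂ] H) z - F) := hz'
      set u := hz''.unit with hu
      have hres_eq : resolvent F z = ↑u⁻¹ := spectrum.resolvent_eq hz'
      have huspec : (u : H →L[ℂ] H) = z • (1:H →L[ℂ] H) - F := by
        rw [hz''.unit_spec, Algebra.algebraMap_eq_smul_one]
      have expand : (z • (1:H →L[ℂ] H) - F) * (z • 1 + F) = (z*z) • 1 - F * F := by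
        rw [sub_mul, mul_add, mul_add]
        simp only [smul_mul_assoc, mul_smul_comm, one_mul, mul_one, smul_smul]
        abel
      have hmul : (u : H →L[ℂ] H) * (↑u⁻¹ - (z^2 - 1)⁻¹ • (z • (1:H →L[ℂ] H) + F))
          = (-(z^2 - 1)⁻¹ : ℂ) • R := by
        rw [mul_sub, Units.mul_inv, huspec, mul_smul_comm, expand, hF]
        rw [show (z*z) • (1:H →L[ℂ] H) - (1 - R) = (z^2 - 1) • (1:H →L[ℂ] H) + R by
          rw [sub_smul, one_smul, sq]; abel]
        rw [smul_add, smul_smul, inv_mul_cancel₀ hne, one_smul, neg_smul]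
        abel
      rw [hres_eq]
      calc (↑u⁻¹ : H →L[ℂ] H) - (z^2-1)⁻¹ • (z • 1 + F)
          = ↑u⁻¹ * ((u : H →L[ℂ] H) * (↑u⁻¹ - (z^2-1)⁻¹ • (z • 1 + F))) := by
            rw [← mul_assoc, Units.inv_mul, one_mul]
        _ = ↑u⁻¹ * ((-(z^2 - 1)⁻¹ : ℂ) • R) := by rw [hmul]
    have hCcont : ContinuousOn
        (fun z : ℂ => resolvent F z - (z^2-1)⁻¹ • (z • (1:H →L[ℂ] H) + F)) (sphere (1:ℂ) r) :=
      (hcont.mono (fun z hz => hsphere r hr1 hr2 z hz)).sub hmcont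
    have hsub : (∮ z in C((1:ℂ), r), (resolvent F z - (z^2-1)⁻¹ • (z • (1:H →L[ℂ] H) + F)))
        = J - (((π:ℂ)*Complex.I) • (1:H →L[ℂ] H) + ((π:ℂ)*Complex.I) • F) := by
      rw [circleIntegral.integral_sub (hci r hr1 hr2) hmci, hmain]
    have hCK : IsCompactOperator
        (⇑(∮ z in C((1:ℂ), r), (resolvent F z - (z^2-1)⁻¹ • (z • (1:H →L[ℂ] H) + F)))) := by
      have hmem : (∮ z in C((1:ℂ), r), (resolvent F z - (z^2-1)⁻¹ • (z • (1:H →L[ℂ] H) + F)))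
          ∈ compactOperator (RingHom.id ℂ) H H := by
        apply aux_circleIntegral_mem _ isClosed_setOf_isCompactOperator hr0.le hCcont
        intro z hz
        have hrep := hCrep _ hz
        show IsCompactOperator _
        rw [hrep]
        have h1 : IsCompactOperator (⇑((-(z^2-1)⁻¹ : ℂ) • R)) := hR.smul _
        exact h1.clm_comp (resolvent F z)
      exact hmem
    have hfinal : P - (1/2 : ℂ) • (F + 1)
        = (2*(π:ℂ)*Complex.I)⁻¹ •
          (∮ z in C((1:ℂ), r), (resolvent F z - (z^2-1)⁻¹ • (z • (1:H →L[ℂ] H) + F))) := by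
      rw [hsub, hP', smul_sub]
      congr 1
      match_scalars <;> field_simp
    rw [hfinal]
    exact hCK.smul _
  exact ⟨hidem, hcompact⟩
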